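/- arXiv:1502.04458 — 3 statements merged into one kernel-verified Lean document; each statement's English description precedes it below -/
import Mathlib

section
/- Let n ≥ 5 be even, let M be a perfect matching in the complete graph K_n, and let G = K_n \ M. Then γ₃(G) = 4. -/
/-- `S` is a 3-dominating set of `G`: every vertex outside `S`
has at least three neighbors in `S`. -/
def ThreeDominating {V : Type*} (G : SimpleGraph V) (S : Finset V) : Prop :=
  ∀ v ∉ S, 3 ≤ {u | u ∈ S ∧ G.Adj v u}.ncard

/-- The 3-domination number: minimum cardinality of a 3-dominating set. -/
noncomputable def gamma3 {V : Type*} [Fintype V] (G : SimpleGraph V) : ℕ :=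
  sInf {k | ∃ S : Finset V, ThreeDominating G S ∧ S.card = k}

theorem stmt_7 (n : ℕ) (hn : 5 ≤ n) (hev : Even n)
    (M : (⊤ : SimpleGraph (Fin n)).Subgraph) (hM : M.IsPerfectMatching) :
    gamma3 ((⊤ : SimpleGraph (Fin n)) \ M.spanningCoe) = 4 := by
  classical
  have hmatch : ∀ v : Fin n, ∃! w, M.Adj v w := fun v => hM.1 (hM.2 v)
  set f : Fin n → Fin n := fun v => (hmatch v).choose with hfdef
  have hadj : ∀ v, M.Adj v (f v) := fun v => (hmatch v).choose_spec.1
  have huniq : ∀ v w, M.Adj v w → w = f v := fun v w h => (hmatch v).choose_spec.2 w h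
  have hne : ∀ v, f v ≠ v := fun v => ((hadj v).ne).symm
  have hinv : ∀ v, f (f v) = v := fun v => (huniq (f v) v (hadj v).symm).symm
  set G := (⊤ : SimpleGraph (Fin n)) \ M.spanningCoe with hG
  have hGadj : ∀ v u : Fin n, G.Adj v u ↔ v ≠ u ∧ ¬ M.Adj v u := by
    intro v u; simp [hG]
  have hset : ∀ (S : Finset (Fin n)) (v : Fin n),
      {u | u ∈ S ∧ G.Adj v u} = ↑(S.filter (fun u => G.Adj v u)) := by
    intro S v; ext u; simp [Finset.mem_filter]
  -- upper bound: a 3-dominating set of size 4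
  have a : Fin n := ⟨0, by omega⟩
  have hb : ∃ b : Fin n, b ∉ ({a, f a} : Finset (Fin n)) := by
    by_contra hc
    push_neg at hc
    have h : ({a, f a} : Finset (Fin n)) = Finset.univ := Finset.eq_univ_iff_forall.mpr hc
    have h1 : ({a, f a} : Finset (Fin n)).card ≤ 2 :=
      (Finset.card_insert_le _ _).trans (by simp)
    rw [h, Finset.card_univ, Fintype.card_fin] at h1
    omega
  obtain ⟨b, hb⟩ := hb
  simp only [Finset.mem_insert, Finset.mem_singleton, not_or] at hb
  obtain ⟨hba, hbfa⟩ := hb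
  have hfba : f b ≠ a := by
    intro h; apply hbfa; rw [← h, hinv]
  have hfbfa : f b ≠ f a := by
    intro h
    apply hba
    have := congrArg f h
    rwa [hinv, hinv] at this
  set S : Finset (Fin n) := {a, f a, b, f b} with hSdef
  have hcard : S.card = 4 := by
    rw [hSdef]
    rw [Finset.card_insert_of_notMem (by
      simp only [Finset.mem_insert, Finset.mem_singleton, not_or]
      exact ⟨fun h => hne a h.symm, fun h => hba h.symm, fun h => hfba h.symm⟩)]
    rw [Finset.card_insert_of_notMem (by
      simp only [Finset.mem_insert, Finset.mem_singleton, not_or]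
      exact ⟨fun h => hbfa h.symm, fun h => hfbfa h.symm⟩)]
    rw [Finset.card_insert_of_notMem (by
      simp only [Finset.mem_singleton]
      exact fun h => (hne b) h.symm)]
    simp
  have hdom : ThreeDominating G S := by
    intro v hv
    rw [hset S v, Set.ncard_coe_finset]
    have hsub : S.erase (f v) ⊆ S.filter (fun u => G.Adj v u) := by
      intro u hu
      rw [Finset.mem_erase] at hu
      rw [Finset.mem_filter]
      refine ⟨hu.2, (hGadj v u).mpr ⟨?_, ?_⟩⟩
      · intro h; exact hv (h ▸ hu.2)
      · intro h; exact hu.1 (huniq v u h)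
    have h1 : S.card - 1 ≤ (S.erase (f v)).card := Finset.pred_card_le_card_erase
    have h2 := Finset.card_le_card hsub
    omega
  -- conclude
  have hmem : (4 : ℕ) ∈ {k | ∃ S : Finset (Fin n), ThreeDominating G S ∧ S.card = k} :=
    ⟨S, hdom, hcard⟩
  refine le_antisymm (Nat.sInf_le hmem) ?_
  refine le_csInf ⟨4, hmem⟩ ?_
  rintro k ⟨T, hT, rfl⟩
  by_contra hlt
  push_neg at hlt
  have hTle : T.card ≤ 3 := by omega
  have hv : ∃ v, v ∉ T := by
    by_contra hc
    push_neg at hc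
    have h : T = Finset.univ := Finset.eq_univ_iff_forall.mpr hc
    rw [h, Finset.card_univ, Fintype.card_fin] at hTle; omega
  obtain ⟨v, hv⟩ := hv
  have h3 := hT v hv
  rw [hset T v, Set.ncard_coe_finset] at h3
  have h4 : (T.filter (fun u => G.Adj v u)).card ≤ T.card := Finset.card_filter_le _ _
  have hT3 : T.card = 3 := by omega
  -- T is closed under the matching
  have hclosed : ∀ u ∈ T, f u ∈ T := by
    intro u hu
    by_contra hfu
    have h5 := hT (f u) hfu
    rw [hset T (f u), Set.ncard_coe_finset] at h5
    have hsub : T.filter (fun w => G.Adj (f u) w) ⊆ T.erase u := by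
      intro w hw
      rw [Finset.mem_filter] at hw
      rw [Finset.mem_erase]
      refine ⟨?_, hw.1⟩
      intro h
      rw [h] at hw
      exact ((hGadj (f u) u).mp hw.2).2 (hadj u).symm
    have h6 := Finset.card_le_card hsub
    rw [Finset.card_erase_of_mem hu, hT3] at h6
    omega
  obtain ⟨x, y, z, hxy, hxz, hyz, hTxyz⟩ := Finset.card_eq_three.mp hT3
  have hmemT : ∀ w : Fin n, w ∈ T ↔ (w = x ∨ w = y ∨ w = z) := by
    intro w; rw [hTxyz]; simp
  have hfx := (hmemT (f x)).mp (hclosed x ((hmemT x).mpr (Or.inl rfl)))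
  have hfz := (hmemT (f z)).mp (hclosed z ((hmemT z).mpr (Or.inr (Or.inr rfl))))
  rcases hfx with h | h | h
  · exact hne x h
  · -- f x = y, so f y = x
    have hfy : f y = x := by rw [← h, hinv]
    rcases hfz with h' | h' | h'
    · have := congrArg f h'
      rw [hinv, h] at this
      exact hyz this.symm
    · have := congrArg f h'
      rw [hinv, hfy] at this
      exact hxz this.symm
    · exact hne z h'
  · -- f x = z, so f z = x; now f y has nowhere to go
    have hfz2 : f z = x := by rw [← h, hinv]
    have hfy := (hmemT (f y)).mp (hclosed y ((hmemT y).mpr (Or.inr (Or.inl rfl))))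
    rcases hfy with h' | h' | h'
    · have := congrArg f h'
      rw [hinv, h] at this
      exact hyz this
    · exact hne y h'
    · have := congrArg f h'
      rw [hinv, hfz2] at this
      exact hxy this.symm
end

section
/- If n ≥ 5 is odd and M is any matching in K_n, then γ₃(K_n \ M) = 3. -/
lemma full_dom {V : Type*} (G : SimpleGraph V) (S : Finset V) (hS : S.card = 3)
    (h : ∀ v ∉ S, ∀ u ∈ S, G.Adj v u) : ThreeDominating G S := by
  intro v hv
  have : {u | u ∈ S ∧ G.Adj v u} = (S : Set V) := by
    ext u
    simp only [Set.mem_setOf_eq, Finset.coe_sort_coe, Finset.mem_coe]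
    exact ⟨fun h => h.1, fun hu => ⟨hu, h v hv u hu⟩⟩
  rw [this, Set.ncard_coe_finset, hS]

theorem stmt_8 (n : ℕ) (hn : 5 ≤ n) (hodd : Odd n)
    (M : (⊤ : SimpleGraph (Fin n)).Subgraph) (hM : M.IsMatching) :
    gamma3 ((⊤ : SimpleGraph (Fin n)) \ M.spanningCoe) = 3 := by
  set G := (⊤ : SimpleGraph (Fin n)) \ M.spanningCoe with hG
  have hadj : ∀ v u : Fin n, G.Adj v u ↔ v ≠ u ∧ ¬ M.Adj v u := by
    intro v u
    simp [hG, SimpleGraph.sdiff_adj]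
  -- existence of a 3-dominating set of size 3
  have hex : ∃ S : Finset (Fin n), ThreeDominating G S ∧ S.card = 3 := by
    by_cases hedge : ∃ a b, M.Adj a b
    · obtain ⟨a, b, hab⟩ := hedge
      have hne : a ≠ b := hab.ne
      -- there is an unmatched vertex
      have hun : ∃ u, u ∉ M.verts := by
        by_contra h
        push_neg at h
        have huniv : M.verts = Set.univ := Set.eq_univ_of_forall h
        haveI : Fintype M.verts := Fintype.ofFinite _
        have heven := hM.even_card
        have hcn : M.verts.toFinset.card = n := by
          rw [Set.toFinset_card]
          simp only [huniv]; rw [Fintype.card_congr (Equiv.Set.univ (Fin n))]; simp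
        rw [hcn] at heven
        exact (Nat.not_even_iff_odd.mpr hodd) heven
      obtain ⟨u, hu⟩ := hun
      have hua : u ≠ a := fun h => hu (h ▸ hab.fst_mem)
      have hub : u ≠ b := fun h => hu (h ▸ hab.snd_mem)
      refine ⟨{a, b, u}, ?_, ?_⟩
      · refine full_dom G _ ?_ ?_
        · rw [Finset.card_insert_of_notMem, Finset.card_insert_of_notMem,
            Finset.card_singleton]
          · simp [hub.symm]
          · simp [hne, hua.symm, hub.symm]
        · intro v hv w hw
          simp only [Finset.mem_insert, Finset.mem_singleton] at hv hw
          push_neg at hv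
          rw [hadj]
          rcases hw with rfl | rfl | rfl
          · refine ⟨hv.1, fun hva => ?_⟩
            obtain ⟨x, hx, hx'⟩ := hM hva.snd_mem
            exact hv.2.1 ((hx' v hva.symm).trans (hx' b hab).symm)
          · refine ⟨hv.2.1, fun hvb => ?_⟩
            obtain ⟨x, hx, hx'⟩ := hM hvb.snd_mem
            exact hv.1 ((hx' v hvb.symm).trans (hx' a hab.symm).symm)
          · exact ⟨hv.2.2, fun hvu => hu hvu.snd_mem⟩
      · rw [Finset.card_insert_of_notMem, Finset.card_insert_of_notMem,
          Finset.card_singleton]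
        · simp [hub.symm]
        · simp [hne, hua.symm, hub.symm]
    · push_neg at hedge
      set x0 : Fin n := ⟨0, by omega⟩ with hx0
      set x1 : Fin n := ⟨1, by omega⟩ with hx1
      set x2 : Fin n := ⟨2, by omega⟩ with hx2
      have h0 : x0 ≠ x1 := by simp [hx0, hx1, Fin.ext_iff]
      have h1 : x1 ≠ x2 := by simp [hx1, hx2, Fin.ext_iff]
      have h2 : x0 ≠ x2 := by simp [hx0, hx2, Fin.ext_iff]
      refine ⟨{x0, x1, x2}, ?_, ?_⟩
      · refine full_dom G _ ?_ ?_
        · rw [Finset.card_insert_of_notMem, Finset.card_insert_of_notMem,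
            Finset.card_singleton]
          · simp [h1]
          · simp [h0, h2]
        · intro v hv w hw
          simp only [Finset.mem_insert, Finset.mem_singleton] at hv hw
          push_neg at hv
          rw [hadj]
          rcases hw with rfl | rfl | rfl
          · exact ⟨hv.1, hedge v x0⟩
          · exact ⟨hv.2.1, hedge v x1⟩
          · exact ⟨hv.2.2, hedge v x2⟩
      · rw [Finset.card_insert_of_notMem, Finset.card_insert_of_notMem,
          Finset.card_singleton]
        · simp [h1]
        · simp [h0, h2]
  obtain ⟨S, hS, hScard⟩ := hex
  refine le_antisymm (Nat.sInf_le ⟨S, hS, hScard⟩) ?_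
  refine le_csInf ⟨3, S, hS, hScard⟩ ?_
  rintro k ⟨T, hT, rfl⟩
  by_contra hk
  push_neg at hk
  have hTne : T ≠ Finset.univ := by
    intro h
    have : T.card = n := by rw [h]; simp
    omega
  obtain ⟨v, -, hv⟩ := Finset.not_subset.mp
    (fun h => hTne (Finset.eq_univ_of_forall (fun x => h (Finset.mem_univ x))))
  have h3 := hT v hv
  have hle : {u | u ∈ T ∧ G.Adj v u}.ncard ≤ T.card := by
    have hsub : {u | u ∈ T ∧ G.Adj v u} ⊆ (T : Set (Fin n)) := fun u hu => hu.1
    have := Set.ncard_le_ncard hsub T.finite_toSet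
    simpa [Set.ncard_coe_finset] using this
  omega
end

section
/- For a connected graph G on n ≥ 3 vertices, γ₃(G) + κ(G) = 2n − 1 if and only if G is isomorphic to K₃. -/
noncomputable def kappa {V : Type*} [Fintype V] [DecidableEq V] (G : SimpleGraph V) : ℕ :=
  sInf {k | ∃ S : Finset V, S.card = k ∧
    (((Sᶜ : Finset V)).card ≤ 1 ∨ ¬ (G.induce (↑(Sᶜ : Finset V) : Set V)).Connected)}

section Aux
set_option linter.unusedSectionVars false
variable {V : Type*} [Fintype V] [DecidableEq V] (G : SimpleGraph V)

lemma gamma3_le_card : gamma3 G ≤ Fintype.card V := by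
  apply Nat.sInf_le
  exact ⟨Finset.univ, fun v hv => absurd (Finset.mem_univ v) hv, Finset.card_univ⟩

lemma three_le_of_dom {S : Finset V} (hS : ThreeDominating G S)
    (h : S.card < Fintype.card V) : 3 ≤ S.card := by
  have : ∃ v, v ∉ S := by
    by_contra hc
    push_neg at hc
    have : S = Finset.univ := Finset.eq_univ_iff_forall.2 hc
    simp [this] at h
  obtain ⟨v, hv⟩ := this
  have h1 := hS v hv
  have hsub : {u | u ∈ S ∧ G.Adj v u} ⊆ (↑S : Set V) := fun u hu => hu.1
  have := Set.ncard_le_ncard hsub S.finite_toSet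
  rw [Set.ncard_coe_finset] at this
  omega

lemma kappa_le [Nonempty V] : kappa G ≤ Fintype.card V - 1 := by
  obtain ⟨v⟩ := ‹Nonempty V›
  apply Nat.sInf_le
  refine ⟨{v}ᶜ, ?_, Or.inl ?_⟩
  · rw [Finset.card_compl, Finset.card_singleton]
  · rw [compl_compl, Finset.card_singleton]

/-- If kappa = n-1 then G is complete. -/
lemma complete_of_kappa (hn : 3 ≤ Fintype.card V)
    (hk : kappa G = Fintype.card V - 1) : ∀ a b : V, a ≠ b → G.Adj a b := by
  intro a b hab
  by_contra hadj
  have hmem : Fintype.card V - 2 ∈ {k | ∃ S : Finset V, S.card = k ∧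
      (((Sᶜ : Finset V)).card ≤ 1 ∨ ¬ (G.induce (↑(Sᶜ : Finset V) : Set V)).Connected)} := by
    refine ⟨({a, b} : Finset V)ᶜ, ?_, Or.inr ?_⟩
    · rw [Finset.card_compl, Finset.card_insert_of_notMem (by simpa using hab),
        Finset.card_singleton]
    · rw [compl_compl]
      intro hc
      have hle : G.induce (↑({a, b} : Finset V) : Set V) ≤ ⊥ := by
        intro x y hxy
        have hx := x.2
        have hy := y.2
        simp only [Finset.coe_insert, Finset.coe_singleton, Set.mem_insert_iff,
          Set.mem_singleton_iff] at hx hy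
        have hGxy : G.Adj (x : V) (y : V) := hxy
        rcases hx with hx | hx <;> rcases hy with hy | hy <;> rw [hx, hy] at hGxy
        · exact G.irrefl hGxy
        · exact hadj hGxy
        · exact hadj hGxy.symm
        · exact G.irrefl hGxy
      have ha : (a : V) ∈ (↑({a, b} : Finset V) : Set V) := by simp
      have hb : (b : V) ∈ (↑({a, b} : Finset V) : Set V) := by simp
      have hr := hc.preconnected ⟨a, ha⟩ ⟨b, hb⟩
      have := SimpleGraph.reachable_bot.mp (hr.mono hle)
      exact hab (congrArg Subtype.val this)
  have := Nat.sInf_le hmem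
  rw [show sInf _ = kappa G from rfl] at this
  omega

lemma complete_dom3 (hcomp : ∀ a b : V, a ≠ b → G.Adj a b)
    {S : Finset V} (hS : S.card = 3) : ThreeDominating G S := by
  intro v hv
  have : {u | u ∈ S ∧ G.Adj v u} = (↑S : Set V) := by
    ext u
    simp only [Set.mem_setOf_eq, Finset.coe_insert, Finset.mem_coe]
    refine ⟨fun h => h.1, fun h => ⟨h, hcomp v u (fun he => hv (he ▸ h))⟩⟩
  rw [this, Set.ncard_coe_finset, hS]

lemma gamma3_complete (hn : Fintype.card V = 3)
    (hcomp : ∀ a b : V, a ≠ b → G.Adj a b) : gamma3 G = 3 := by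
  apply le_antisymm
  · have := gamma3_le_card G; omega
  · have hmem : Fintype.card V ∈ {k | ∃ S : Finset V, ThreeDominating G S ∧ S.card = k} :=
      ⟨Finset.univ, fun v hv => absurd (Finset.mem_univ v) hv, Finset.card_univ⟩
    apply le_csInf ⟨_, hmem⟩
    rintro k ⟨S, hS, rfl⟩
    by_contra h
    push_neg at h
    have := three_le_of_dom G hS (by omega)
    omega

lemma kappa_complete (hn : Fintype.card V = 3)
    (hcomp : ∀ a b : V, a ≠ b → G.Adj a b) : kappa G = 2 := by
  apply le_antisymm
  · obtain ⟨S, _, hS⟩ := Finset.exists_subset_card_eq (s := (Finset.univ : Finset V)) (n := 2)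
      (by rw [Finset.card_univ]; omega)
    apply Nat.sInf_le
    refine ⟨S, hS, Or.inl ?_⟩
    rw [Finset.card_compl]; omega
  · apply le_csInf
    · have : Nonempty V := Fintype.card_pos_iff.mp (by omega)
      obtain ⟨v⟩ := this
      exact ⟨Fintype.card V - 1, {v}ᶜ,
        by rw [Finset.card_compl, Finset.card_singleton], Or.inl (by
          rw [compl_compl, Finset.card_singleton])⟩
    rintro k ⟨S, rfl, hdisj⟩
    by_contra h
    push_neg at h
    have hcS : 2 ≤ (Sᶜ : Finset V).card := by
      rw [Finset.card_compl]; omega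
    rcases hdisj with h1 | h2
    · omega
    · apply h2
      have hne : Nonempty (↑(↑(Sᶜ : Finset V) : Set V)) := by
        obtain ⟨v, hv⟩ := Finset.card_pos.mp (by omega : 0 < (Sᶜ : Finset V).card)
        exact ⟨⟨v, by simpa using hv⟩⟩
      constructor
      intro x y
      by_cases hxy : x = y
      · exact hxy ▸ SimpleGraph.Reachable.refl x
      · have : G.Adj (x : V) (y : V) :=
          hcomp _ _ (fun he => hxy (Subtype.ext he))
        exact SimpleGraph.Adj.reachable this

end Aux

theorem stmt_12 {V : Type*} [Fintype V] [DecidableEq V] (G : SimpleGraph V)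
    (hconn : G.Connected) (hn : 3 ≤ Fintype.card V) :
    gamma3 G + kappa G = 2 * Fintype.card V - 1 ↔
      Nonempty (G ≃g (⊤ : SimpleGraph (Fin 3))) := by
  have hne : Nonempty V := Fintype.card_pos_iff.mp (by omega)
  constructor
  · intro h
    have hg := gamma3_le_card G
    have hk := kappa_le G
    have hgeq : gamma3 G = Fintype.card V := by omega
    have hkeq : kappa G = Fintype.card V - 1 := by omega
    have hcomp := complete_of_kappa G hn hkeq
    have hcard : Fintype.card V = 3 := by
      by_contra hc
      have h4 : 4 ≤ Fintype.card V := by omega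
      obtain ⟨S, _, hS⟩ := Finset.exists_subset_card_eq (s := (Finset.univ : Finset V)) (n := 3)
        (by rw [Finset.card_univ]; omega)
      have : gamma3 G ≤ 3 := Nat.sInf_le ⟨S, complete_dom3 G hcomp hS, hS⟩
      omega
    have e : V ≃ Fin 3 := Fintype.equivFinOfCardEq hcard
    refine ⟨⟨e, ?_⟩⟩
    intro a b
    simp only [SimpleGraph.top_adj, ne_eq, EmbeddingLike.apply_eq_iff_eq]
    constructor
    · exact fun hab => hcomp a b hab
    · exact fun hab he => G.irrefl (he ▸ hab)
  · rintro ⟨f⟩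
    have hcard : Fintype.card V = 3 := by
      rw [Fintype.card_congr f.toEquiv, Fintype.card_fin]
    have hcomp : ∀ a b : V, a ≠ b → G.Adj a b := by
      intro a b hab
      apply f.map_rel_iff.mp
      simp only [SimpleGraph.top_adj, ne_eq]
      exact fun he => hab (f.toEquiv.injective he)
    rw [gamma3_complete G hcard hcomp, kappa_complete G hcard hcomp, hcard]
end
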